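/- Let A be a parity tree automaton with t ∉ L(A), let φ be an accepting computation of A on a tree t', and let STR be a winning strategy of Pathfinder in the membership game G_{t,A}. Consider the play consistent with the positional Automaton strategy str_φ and with STR. Then this play contains an invalid move for Automaton (a move (q_l,q_r) from position (v,q) with (q, t(v), q_l, q_r) ∉ δ), and if the first invalid move occurs after Pathfinder moves d_0,...,d_{i-1}, then t(v) ≠ t'(v) for v = d_0···d_{i-1}. -/

import Mathlib

/-- A parity tree automaton over state set `Q` and alphabet `Γ`. -/
structure PTA (Q Γ : Type*) where
  init : Set Q
  delta : Set (Q × Γ × Q × Q)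
  color : Q → ℕ

variable {Q Γ : Type*}

/-- `φ` is a computation of `A` on the tree `t`. -/
def IsComputation (A : PTA Q Γ) (t : List Bool → Γ) (φ : List Bool → Q) : Prop :=
  φ [] ∈ A.init ∧ ∀ v : List Bool, (φ v, t v, φ (v ++ [false]), φ (v ++ [true])) ∈ A.delta

/-- The node at depth `i` along the infinite branch determined by `d`. -/
def branchNode (d : ℕ → Bool) (i : ℕ) : List Bool :=
  List.ofFn (fun j : Fin i => d j)

/-- `c` occurs infinitely often in the sequence `f`. -/
def InfOften (f : ℕ → ℕ) (c : ℕ) : Prop := ∀ N : ℕ, ∃ i, N ≤ i ∧ f i = c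

/-- The parity condition: the maximal value occurring infinitely often is even. -/
def ParityAccept (f : ℕ → ℕ) : Prop :=
  ∃ c, Even c ∧ InfOften f c ∧ ∀ c', InfOften f c' → c' ≤ c

/-- `φ` is an accepting computation of `A` on `t`. -/
def IsAccepting (A : PTA Q Γ) (t : List Bool → Γ) (φ : List Bool → Q) : Prop :=
  IsComputation A t φ ∧
    ∀ d : ℕ → Bool, ParityAccept (fun i => A.color (φ (branchNode d i)))

/-- The set of accepting computations of `A` on `t`. -/
def ACC (A : PTA Q Γ) (t : List Bool → Γ) : Set (List Bool → Q) :=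
  {φ | IsAccepting A t φ}

/-- The language of `A`. -/
def Lang (A : PTA Q Γ) : Set (List Bool → Γ) := {t | (ACC A t).Nonempty}

/-- `A_q`: the automaton `A` with initial-state set `{q}`. -/
def restart (A : PTA Q Γ) (q : Q) : PTA Q Γ := { A with init := {q} }

/-- Grafting `t1` at node `v` in `t`. -/
def graft {α : Type*} (t t1 : List Bool → α) (v : List Bool) : List Bool → α :=
  fun u => if v <+: u then t1 (u.drop v.length) else t u

/-- The positional Automaton strategy induced by a computation `φ`:
`str_φ(v, q) := (φ(v·l), φ(v·r))`. -/
def strOf (φ : List Bool → Q) : List Bool → Q → Q × Q :=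
  fun v _ => (φ (v ++ [false]), φ (v ++ [true]))

/-- The sequence of Automaton positions `(v_i, q_i)` in the play of the
membership game `G_{t,A}` where Automaton plays the positional strategy `str`
and Pathfinder plays the positional strategy `STR` (which chooses a direction
`d ∈ {l,r}`, with `l = false`, `r = true`), starting from `(ε, qI)`. -/
def playPos (qI : Q) (str : List Bool → Q → Q × Q)
    (STR : List Bool → Q → Q → Bool) : ℕ → List Bool × Q
  | 0 => ([], qI)
  | n + 1 =>
    let p := playPos qI str STR n
    let e := str p.1 p.2
    let dd := STR p.1 e.1 e.2
    (p.1 ++ [dd], if dd then e.2 else e.1)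

/-- At step `i` of the play, Automaton's move is invalid with respect to
the input tree `t`. -/
def InvalidAt (A : PTA Q Γ) (t : List Bool → Γ) (qI : Q)
    (str : List Bool → Q → Q × Q) (STR : List Bool → Q → Q → Bool)
    (i : ℕ) : Prop :=
  ((playPos qI str STR i).2, t (playPos qI str STR i).1,
    (str (playPos qI str STR i).1 (playPos qI str STR i).2).1,
    (str (playPos qI str STR i).1 (playPos qI str STR i).2).2) ∉ A.delta

/-- The play of `str` against `STR` in `G_{t,A}` is won by Pathfinder:
either Automaton makes an invalid move, or the maximal color of Automaton
positions occurring infinitely often is odd. -/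
def PathfinderWinsPlay (A : PTA Q Γ) (t : List Bool → Γ) (qI : Q)
    (str : List Bool → Q → Q × Q) (STR : List Bool → Q → Q → Bool) : Prop :=
  (∃ i, InvalidAt A t qI str STR i) ∨
    ∃ c, Odd c ∧ InfOften (fun i => A.color (playPos qI str STR i).2) c ∧
      ∀ c', InfOften (fun i => A.color (playPos qI str STR i).2) c' → c' ≤ c

/-- If `t ∉ L(A)`, `φ` is an accepting computation of `A` on `t'`, and `STR` is
a winning strategy of Pathfinder in the membership game `G_{t,A}`, then the
play of `str_φ` against `STR` contains an invalid Automaton move, and at the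
first invalid move, the node `v = d_0⋯d_{i-1}` reached satisfies
`t(v) ≠ t'(v)`. -/
theorem winning_strategy_leads (A : PTA Q Γ) (t t' : List Bool → Γ) (qI : Q)
    (hI : A.init = {qI}) (hnt : t ∉ Lang A)
    (φ : List Bool → Q) (hφ : φ ∈ ACC A t')
    (STR : List Bool → Q → Q → Bool)
    (hwin : ∀ str : List Bool → Q → Q × Q, PathfinderWinsPlay A t qI str STR) :
    (∃ i, InvalidAt A t qI (strOf φ) STR i) ∧
    ∀ i : ℕ, InvalidAt A t qI (strOf φ) STR i →
      (∀ j, j < i → ¬ InvalidAt A t qI (strOf φ) STR j) →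
      t (playPos qI (strOf φ) STR i).1 ≠ t' (playPos qI (strOf φ) STR i).1 := by
  obtain ⟨⟨hinit, hdelta⟩, hpar⟩ := hφ
  have hq0 : φ [] = qI := by rw [hI] at hinit; exact hinit
  -- the state of the play is φ of the node
  have hstate : ∀ n, (playPos qI (strOf φ) STR n).2 = φ (playPos qI (strOf φ) STR n).1 := by
    intro n
    induction n with
    | zero => simp [playPos, hq0]
    | succ n ih =>
      simp only [playPos, strOf]
      have key : ∀ (b : Bool) (p : List Bool),
          (if b = true then φ (p ++ [true]) else φ (p ++ [false])) = φ (p ++ [b]) := by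
        intro b p; cases b <;> simp
      exact key _ _
  refine ⟨?_, ?_⟩
  · -- existence of an invalid move
    rcases hwin (strOf φ) with h | ⟨c, hodd, hio, hmax⟩
    · exact h
    · exfalso
      set d : ℕ → Bool := fun n =>
        STR (playPos qI (strOf φ) STR n).1
          (strOf φ (playPos qI (strOf φ) STR n).1 (playPos qI (strOf φ) STR n).2).1
          (strOf φ (playPos qI (strOf φ) STR n).1 (playPos qI (strOf φ) STR n).2).2 with hd
      have hnode : ∀ n, (playPos qI (strOf φ) STR n).1 = branchNode d n := by
        intro n
        induction n with
        | zero => simp [playPos, branchNode]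
        | succ n ih =>
          have : branchNode d (n + 1) = branchNode d n ++ [d n] := by
            simp only [branchNode, List.ofFn_succ', List.concat_eq_append,
              Fin.coe_castSucc, Fin.val_last]
          rw [this, ← ih]
          rfl
      have hfun : (fun i => A.color (playPos qI (strOf φ) STR i).2)
          = fun i => A.color (φ (branchNode d i)) := by
        funext i; rw [hstate i, hnode i]
      rw [hfun] at hio hmax
      obtain ⟨c', hev, hio', hmax'⟩ := hpar d
      have h1 := hmax c' hio'
      have h2 := hmax' c hio
      have : c = c' := le_antisymm h2 h1
      rw [this] at hodd
      have := Nat.odd_iff.mp hodd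
      have := Nat.even_iff.mp hev
      omega
  · intro i hinv _ heq
    apply hinv
    rw [hstate i, heq]
    exact hdelta (playPos qI (strOf φ) STR i).1
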